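/- Fix a bounded b : ℤ → ℝ. Let γ ≥ 1, let (φ_m)_{m∈ℤ} be an orthonormal (Hilbert) basis of ℓ²(ℤ), and let λ : ℤ → ℝ be such that for each m and every n ∈ ℤ: φ_m(n−1) + φ_m(n+1) + (n + b(n))·φ_m(n) = λ(m)·φ_m(n), and |λ(m) − m − b(n)| ≤ γ for all m, n ∈ ℤ. Then for every q > 0 and every k ∈ ℤ, sup over t ∈ ℝ of Σ_{n∈ℤ} |n|^q · |Σ_{m∈ℤ} e^{−i t λ(m)} · conj(φ_m(k)) · φ_m(n)|² is finite. That is, the perturbed discrete Schrödinger operator with uniform electric field H_0 + b exhibits dynamical localization: all moments of order q > 0 are uniformly bounded in time. -/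

import Mathlib

noncomputable section

open scoped BigOperators ComplexConjugate

abbrev ℓ2 : Type := lp (fun _ : ℤ => ℂ) 2

/-- Decay along a ray from a three-term inequality. -/
lemma ray_decay (g : ℤ → ℝ) (hg0 : ∀ n, 0 ≤ g n) (hg1 : ∀ n, g n ≤ 1)
    (N0 : ℤ) (hrec : ∀ n : ℤ, N0 + 1 ≤ n → 3 * g n ≤ g (n - 1) + g (n + 1)) :
    ∀ j : ℕ, ∀ n : ℤ, N0 + j ≤ n → g n ≤ (2/3) ^ j := by
  set S : ℕ → Set ℝ := fun j => g '' {n | N0 + j ≤ n} with hS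
  have hbdd : ∀ j, BddAbove (S j) := by
    intro j; refine ⟨1, ?_⟩; rintro x ⟨n, _, rfl⟩; exact hg1 n
  set M : ℕ → ℝ := fun j => sSup (S j) with hM
  have hle : ∀ (j : ℕ) (n : ℤ), N0 + j ≤ n → g n ≤ M j := by
    intro j n h; exact le_csSup (hbdd j) ⟨n, h, rfl⟩
  have hstep : ∀ j : ℕ, M (j+1) ≤ 2/3 * M j := by
    intro j
    have hMj0 : 0 ≤ M j := le_trans (hg0 _) (hle j (N0 + j) le_rfl)
    refine Real.sSup_le ?_ (by positivity)
    rintro x ⟨n, hn, rfl⟩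
    simp only [Set.mem_setOf_eq] at hn
    have hn' : N0 + 1 ≤ n := by push_cast at hn; omega
    have h1 := hrec n hn'
    have h2 : g (n - 1) ≤ M j := hle j _ (by push_cast at hn ⊢; omega)
    have h3 : g (n + 1) ≤ M j := hle j _ (by push_cast at hn ⊢; omega)
    linarith
  have hind : ∀ j : ℕ, M j ≤ (2/3) ^ j := by
    intro j
    induction j with
    | zero =>
      simpa using Real.sSup_le (by rintro x ⟨n, _, rfl⟩; exact hg1 n) zero_le_one
    | succ j ih =>
      calc M (j+1) ≤ 2/3 * M j := hstep j
        _ ≤ 2/3 * (2/3)^j := by linarith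
        _ = (2/3)^(j+1) := by ring
  exact fun j n h => (hle j n h).trans (hind j)

lemma summable_poly_geom_nat (N : ℕ) (c ρ : ℝ) (h0 : 0 ≤ ρ) (h1 : ρ < 1) :
    Summable (fun n : ℕ => ((n : ℝ) + c)^N * ρ^n) := by
  have hfun : ∀ n : ℕ, ((n : ℝ) + c)^N * ρ^n
      = ∑ i ∈ Finset.range (N+1), (c^(N-i) * (N.choose i)) * ((n:ℝ)^i * ρ^n) := by
    intro n
    rw [add_pow, Finset.sum_mul]
    refine Finset.sum_congr rfl fun i _ => by ring
  refine Summable.congr (f := fun n : ℕ =>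
      ∑ i ∈ Finset.range (N+1), (c^(N-i) * (N.choose i)) * ((n:ℝ)^i * ρ^n)) ?_
    (fun n => (hfun n).symm)
  refine summable_sum fun i _ => ?_
  exact (summable_pow_mul_geometric_of_norm_lt_one (R := ℝ) i
    (by rwa [Real.norm_eq_abs, abs_of_nonneg h0])).mul_left _

lemma summable_poly_geom_int (N : ℕ) (c ρ : ℝ) (h0 : 0 ≤ ρ) (h1 : ρ < 1) :
    Summable (fun j : ℤ => ((j.natAbs : ℝ) + c)^N * ρ^(j.natAbs)) := by
  refine Summable.of_nat_of_neg_add_one ?_ ?_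
  · exact (summable_poly_geom_nat N c ρ h0 h1).congr (fun n => by simp)
  · refine ((summable_poly_geom_nat N (c+1) ρ h0 h1).mul_left ρ).congr (fun n => ?_)
    have h : ((-((n:ℤ) + 1)).natAbs) = n + 1 := by omega
    rw [h]
    push_cast
    ring

lemma summable_geom_int (ρ : ℝ) (h0 : 0 ≤ ρ) (h1 : ρ < 1) :
    Summable (fun j : ℤ => ρ^(j.natAbs)) := by
  refine (summable_poly_geom_int 0 0 ρ h0 h1).congr (fun j => by simp)

lemma eig_decay (b : ℤ → ℝ) (γ : ℝ)
    (φ : ℤ → ℓ2) (lam : ℤ → ℝ)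
    (hn1 : ∀ m n : ℤ, ‖(φ m : ∀ _ : ℤ, ℂ) n‖ ≤ 1)
    (heig : ∀ m n : ℤ,
      (φ m : ∀ _ : ℤ, ℂ) (n - 1) + (φ m : ∀ _ : ℤ, ℂ) (n + 1) +
        ((n : ℂ) + (b n : ℂ)) * (φ m : ∀ _ : ℤ, ℂ) n
      = (lam m : ℂ) * (φ m : ∀ _ : ℤ, ℂ) n)
    (hloc : ∀ m n : ℤ, |lam m - m - b n| ≤ γ)
    (Dn : ℕ) (hD : γ + 3 ≤ (Dn : ℝ)) :
    ∀ m n : ℤ, ‖(φ m : ∀ _ : ℤ, ℂ) n‖ ≤ (3/2 : ℝ)^Dn * (2/3 : ℝ)^((n - m).natAbs) := by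
  intro m
  set u : ∀ _ : ℤ, ℂ := (φ m : ∀ _ : ℤ, ℂ) with hu
  set g : ℤ → ℝ := fun n => ‖u n‖ with hg
  have hg0 : ∀ n, 0 ≤ g n := fun n => norm_nonneg _
  have hg1 : ∀ n, g n ≤ 1 := fun n => hn1 m n
  have key : ∀ n : ℤ, γ + 3 ≤ |(n : ℝ) - m| → 3 * g n ≤ g (n - 1) + g (n + 1) := by
    intro n hn
    have e1 : u (n - 1) + u (n + 1) = ((lam m - n - b n : ℝ) : ℂ) * u n := by
      push_cast
      linear_combination heig m n
    have e2 : ‖u (n - 1) + u (n + 1)‖ = |lam m - n - b n| * g n := by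
      rw [e1, norm_mul, Complex.norm_real, Real.norm_eq_abs]
    have e3 : (3 : ℝ) ≤ |lam m - ↑n - b n| := by
      have h4 : |(n : ℝ) - m| - |lam m - m - b n| ≤ |((n : ℝ) - m) - (lam m - m - b n)| :=
        abs_sub_abs_le_abs_sub _ _
      have h5 : |((n : ℝ) - m) - (lam m - m - b n)| = |lam m - ↑n - b n| := by
        rw [← abs_neg]; ring_nf
      have := hloc m n
      rw [h5] at h4
      linarith
    have e4 : 3 * g n ≤ |lam m - ↑n - b n| * g n :=
      mul_le_mul_of_nonneg_right e3 (hg0 n)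
    calc 3 * g n ≤ |lam m - ↑n - b n| * g n := e4
      _ = ‖u (n - 1) + u (n + 1)‖ := e2.symm
      _ ≤ g (n - 1) + g (n + 1) := norm_add_le _ _
  -- right ray
  have hR : ∀ j : ℕ, ∀ n : ℤ, (m + Dn) + j ≤ n → g n ≤ (2/3)^j := by
    refine ray_decay g hg0 hg1 (m + Dn) ?_
    intro n hn
    refine key n ?_
    have h1 : (m : ℝ) + Dn + 1 ≤ n := by exact_mod_cast hn
    have : γ + 3 ≤ (n : ℝ) - m := by linarith
    rwa [abs_of_nonneg (by linarith)]
  -- left ray (reflected)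
  have hL : ∀ j : ℕ, ∀ n : ℤ, (m + Dn) + j ≤ n → g (2*m - n) ≤ (2/3)^j := by
    refine ray_decay (fun n => g (2*m - n)) (fun n => hg0 _) (fun n => hg1 _) (m + Dn) ?_
    intro n hn
    have h1 : (m : ℝ) + Dn + 1 ≤ n := by exact_mod_cast hn
    have habs : γ + 3 ≤ |(2*(m:ℝ) - n) - m| := by
      rw [abs_sub_comm]
      rw [abs_of_nonneg (by linarith)]
      linarith
    have hcast : ((2*m - n : ℤ):ℝ) = 2*(m:ℝ) - n := by push_cast; ring
    have := key (2*m - n) (by rw [hcast]; exact habs)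
    have ea : 2*m - n - 1 = 2*m - (n+1) := by ring
    have eb : 2*m - n + 1 = 2*m - (n-1) := by ring
    rw [ea, eb] at this
    linarith
  have hone : (3/2 : ℝ)^Dn * (2/3 : ℝ)^Dn = 1 := by
    rw [← mul_pow]; norm_num
  have hKpos : (1:ℝ) ≤ (3/2 : ℝ)^Dn := one_le_pow₀ (by norm_num)
  intro n
  rcases le_or_gt (m + Dn : ℤ) n with hc | hc
  · set j : ℕ := (n - m - Dn).toNat with hj
    have hjz : (j : ℤ) = n - m - Dn := by omega
    have h1 : g n ≤ (2/3)^j := hR j n (by omega)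
    have hd : (n - m).natAbs = j + Dn := by omega
    calc g n ≤ (2/3)^j := h1
      _ = (3/2 : ℝ)^Dn * (2/3 : ℝ)^Dn * (2/3)^j := by rw [hone, one_mul]
      _ = (3/2 : ℝ)^Dn * (2/3 : ℝ)^((n-m).natAbs) := by rw [hd, pow_add]; ring
  rcases le_or_gt n (m - Dn : ℤ) with hc2 | hc2
  · set j : ℕ := (m - Dn - n).toNat with hj
    have hjz : (j : ℤ) = m - Dn - n := by omega
    have h1 : g (2*m - (2*m - n)) ≤ (2/3)^j := hL j (2*m - n) (by omega)
    have h2 : (2*m - (2*m - n)) = n := by ring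
    rw [h2] at h1
    have hd : (n - m).natAbs = j + Dn := by omega
    calc g n ≤ (2/3)^j := h1
      _ = (3/2 : ℝ)^Dn * (2/3 : ℝ)^Dn * (2/3)^j := by rw [hone, one_mul]
      _ = (3/2 : ℝ)^Dn * (2/3 : ℝ)^((n-m).natAbs) := by rw [hd, pow_add]; ring
  · have hd : (n - m).natAbs ≤ Dn := by omega
    have h1 : (2/3 : ℝ)^Dn ≤ (2/3 : ℝ)^((n-m).natAbs) :=
      pow_le_pow_of_le_one (by norm_num) (by norm_num) hd
    calc g n ≤ 1 := hg1 n
      _ = (3/2 : ℝ)^Dn * (2/3 : ℝ)^Dn := hone.symm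
      _ ≤ (3/2 : ℝ)^Dn * (2/3 : ℝ)^((n-m).natAbs) := by
          exact mul_le_mul_of_nonneg_left h1 (by positivity)

theorem stmt_4
    (b : ℤ → ℝ) (hb : BddAbove (Set.range fun n : ℤ => |b n|))
    (γ : ℝ) (hγ : 1 ≤ γ)
    (φ : ℤ → ℓ2) (lam : ℤ → ℝ)
    (hON : Orthonormal ℂ φ)
    (hcomplete : (Submodule.span ℂ (Set.range φ)).topologicalClosure = ⊤)
    (heig : ∀ m n : ℤ,
      (φ m : ∀ _ : ℤ, ℂ) (n - 1) + (φ m : ∀ _ : ℤ, ℂ) (n + 1) +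
        ((n : ℂ) + (b n : ℂ)) * (φ m : ∀ _ : ℤ, ℂ) n
      = (lam m : ℂ) * (φ m : ∀ _ : ℤ, ℂ) n)
    (hloc : ∀ m n : ℤ, |lam m - m - b n| ≤ γ) :
    ∀ q : ℝ, 0 < q → ∀ k : ℤ,
      ∃ C : ℝ, ∀ t : ℝ,
        Summable (fun n : ℤ => (|n| : ℝ) ^ q *
          ‖∑' m : ℤ, Complex.exp (-(Complex.I * t * lam m)) *
            conj ((φ m : ∀ _ : ℤ, ℂ) k) * (φ m : ∀ _ : ℤ, ℂ) n‖ ^ 2) ∧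
        (∑' n : ℤ, (|n| : ℝ) ^ q *
          ‖∑' m : ℤ, Complex.exp (-(Complex.I * t * lam m)) *
            conj ((φ m : ∀ _ : ℤ, ℂ) k) * (φ m : ∀ _ : ℤ, ℂ) n‖ ^ 2) ≤ C := by
  have hn1 : ∀ m n : ℤ, ‖(φ m : ∀ _ : ℤ, ℂ) n‖ ≤ 1 := by
    intro m n
    have h := lp.norm_apply_le_norm (E := fun _ : ℤ => ℂ) (p := 2) (by norm_num) (φ m) n
    rwa [hON.1 m] at h
  set Dn : ℕ := ⌈γ⌉₊ + 3 with hDn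
  have hD : γ + 3 ≤ (Dn : ℝ) := by
    have := Nat.le_ceil γ
    rw [hDn]
    push_cast
    linarith
  set K : ℝ := (3/2 : ℝ)^Dn with hKdef
  have hK1 : (1:ℝ) ≤ K := one_le_pow₀ (by norm_num)
  have hK0 : (0:ℝ) ≤ K := by linarith
  have hdec : ∀ m n : ℤ, ‖(φ m : ∀ _ : ℤ, ℂ) n‖ ≤ K * (2/3)^((n-m).natAbs) :=
    eig_decay b γ φ lam hn1 heig hloc Dn hD
  set r : ℝ := Real.sqrt (2/3) with hrdef
  have hr0 : 0 ≤ r := Real.sqrt_nonneg _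
  have hr2 : r * r = 2/3 := Real.mul_self_sqrt (by norm_num)
  have hr1 : r < 1 := by nlinarith
  intro q hq k
  set N : ℕ := ⌈q⌉₊ with hN
  have hqN : q ≤ (N : ℝ) := Nat.le_ceil q
  have hsumr : Summable (fun j : ℤ => r ^ j.natAbs) := summable_geom_int r hr0 hr1
  set Cr : ℝ := ∑' j : ℤ, r ^ j.natAbs with hCrdef
  have hCr0 : 0 ≤ Cr := tsum_nonneg (fun j => by positivity)
  set c : ℝ := |(k:ℝ)| + 1 with hc
  have hc1 : (1:ℝ) ≤ c := by
    have := abs_nonneg ((k:ℝ))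
    rw [hc]; linarith
  set f : ℤ → ℝ := fun j => ((j.natAbs : ℝ) + c)^N * ((K^2*Cr)^2 * (2/3)^(j.natAbs)) with hf
  set G : ℤ → ℝ := fun n => f (n - k) with hG
  have hfsum : Summable f := by
    have h := (summable_poly_geom_int N c (2/3) (by norm_num) (by norm_num)).mul_left ((K^2*Cr)^2)
    exact h.congr (fun j => by rw [hf]; ring)
  have hGsum : Summable G := by
    have := (Equiv.subRight k).summable_iff.mpr hfsum
    exact this.congr (fun n => rfl)
  refine ⟨∑' n : ℤ, G n, ?_⟩
  intro t
  -- norm of each term of the m-sum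
  have hterm : ∀ n m : ℤ, ‖Complex.exp (-(Complex.I * t * lam m)) *
      conj ((φ m : ∀ _ : ℤ, ℂ) k) * (φ m : ∀ _ : ℤ, ℂ) n‖
      = ‖(φ m : ∀ _ : ℤ, ℂ) k‖ * ‖(φ m : ∀ _ : ℤ, ℂ) n‖ := by
    intro n m
    rw [norm_mul, norm_mul, RCLike.norm_conj]
    have h1 : ‖Complex.exp (-(Complex.I * t * lam m))‖ = 1 := by
      rw [Complex.norm_exp]
      simp [Complex.mul_re]
    rw [h1, one_mul]
  have hprod : ∀ n m : ℤ, ‖(φ m : ∀ _ : ℤ, ℂ) k‖ * ‖(φ m : ∀ _ : ℤ, ℂ) n‖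
      ≤ (K^2 * r^((n-k).natAbs)) * r^((n-m).natAbs) := by
    intro n m
    have ha := hdec m k
    have hbb := hdec m n
    have h := mul_le_mul ha hbb (norm_nonneg _) (by positivity)
    set a : ℕ := (k-m).natAbs with hadef
    set bb : ℕ := (n-m).natAbs with hbdef
    have htri : (n-k).natAbs ≤ a + bb := by omega
    have h2 : (2/3:ℝ)^a * (2/3:ℝ)^bb = r^(a+bb) * r^(a+bb) := by
      rw [← pow_add, ← mul_pow, hr2]
    have h3 : r^(a+bb) ≤ r^((n-k).natAbs) := pow_le_pow_of_le_one hr0 hr1.le htri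
    have h4 : r^(a+bb) ≤ r^bb := pow_le_pow_of_le_one hr0 hr1.le (by omega)
    have h5 : r^(a+bb) * r^(a+bb) ≤ r^((n-k).natAbs) * r^bb :=
      mul_le_mul h3 h4 (by positivity) (by positivity)
    calc ‖(φ m : ∀ _ : ℤ, ℂ) k‖ * ‖(φ m : ∀ _ : ℤ, ℂ) n‖
        ≤ (K * (2/3)^a) * (K * (2/3)^bb) := h
      _ = K^2 * ((2/3:ℝ)^a * (2/3:ℝ)^bb) := by ring
      _ = K^2 * (r^(a+bb) * r^(a+bb)) := by rw [h2]
      _ ≤ K^2 * (r^((n-k).natAbs) * r^bb) := by nlinarith [sq_nonneg K]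
      _ = (K^2 * r^((n-k).natAbs)) * r^bb := by ring
  have hshift : ∀ n : ℤ, Summable (fun m : ℤ => r^((n-m).natAbs)) := by
    intro n
    have := (Equiv.subLeft n).summable_iff.mpr hsumr
    exact this.congr (fun m => rfl)
  have hshiftsum : ∀ n : ℤ, ∑' m : ℤ, r^((n-m).natAbs) = Cr := by
    intro n
    exact (Equiv.subLeft n).tsum_eq (fun j : ℤ => r^(j.natAbs))
  have hsumnorm : ∀ n : ℤ, Summable (fun m : ℤ =>
      ‖(φ m : ∀ _ : ℤ, ℂ) k‖ * ‖(φ m : ∀ _ : ℤ, ℂ) n‖) := by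
    intro n
    refine Summable.of_nonneg_of_le (fun m => by positivity) (hprod n) ?_
    exact (hshift n).mul_left _
  have hpsi : ∀ n : ℤ, ‖∑' m : ℤ, Complex.exp (-(Complex.I * t * lam m)) *
      conj ((φ m : ∀ _ : ℤ, ℂ) k) * (φ m : ∀ _ : ℤ, ℂ) n‖
      ≤ K^2 * r^((n-k).natAbs) * Cr := by
    intro n
    have hs : Summable (fun m : ℤ => ‖Complex.exp (-(Complex.I * t * lam m)) *
        conj ((φ m : ∀ _ : ℤ, ℂ) k) * (φ m : ∀ _ : ℤ, ℂ) n‖) :=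
      (hsumnorm n).congr (fun m => (hterm n m).symm)
    calc ‖∑' m : ℤ, Complex.exp (-(Complex.I * t * lam m)) *
          conj ((φ m : ∀ _ : ℤ, ℂ) k) * (φ m : ∀ _ : ℤ, ℂ) n‖
        ≤ ∑' m : ℤ, ‖Complex.exp (-(Complex.I * t * lam m)) *
          conj ((φ m : ∀ _ : ℤ, ℂ) k) * (φ m : ∀ _ : ℤ, ℂ) n‖ := norm_tsum_le_tsum_norm hs
      _ = ∑' m : ℤ, ‖(φ m : ∀ _ : ℤ, ℂ) k‖ * ‖(φ m : ∀ _ : ℤ, ℂ) n‖ := tsum_congr (hterm n)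
      _ ≤ ∑' m : ℤ, (K^2 * r^((n-k).natAbs)) * r^((n-m).natAbs) :=
          Summable.tsum_le_tsum (hprod n) (hsumnorm n) ((hshift n).mul_left _)
      _ = (K^2 * r^((n-k).natAbs)) * ∑' m : ℤ, r^((n-m).natAbs) := tsum_mul_left
      _ = K^2 * r^((n-k).natAbs) * Cr := by rw [hshiftsum n]
  have hpsi2 : ∀ n : ℤ, ‖∑' m : ℤ, Complex.exp (-(Complex.I * t * lam m)) *
      conj ((φ m : ∀ _ : ℤ, ℂ) k) * (φ m : ∀ _ : ℤ, ℂ) n‖ ^ 2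
      ≤ (K^2*Cr)^2 * (2/3:ℝ)^((n-k).natAbs) := by
    intro n
    have h := pow_le_pow_left₀ (norm_nonneg _) (hpsi n) 2
    refine h.trans (le_of_eq ?_)
    have : (r^((n-k).natAbs))^2 = (2/3:ℝ)^((n-k).natAbs) := by
      rw [← pow_mul, mul_comm ((n-k).natAbs) 2, pow_mul, pow_two, hr2]
    calc (K^2 * r^((n-k).natAbs) * Cr)^2
        = (K^2*Cr)^2 * (r^((n-k).natAbs))^2 := by ring
      _ = (K^2*Cr)^2 * (2/3:ℝ)^((n-k).natAbs) := by rw [this]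
  have hmain : ∀ n : ℤ, (|n| : ℝ) ^ q *
      ‖∑' m : ℤ, Complex.exp (-(Complex.I * t * lam m)) *
        conj ((φ m : ∀ _ : ℤ, ℂ) k) * (φ m : ∀ _ : ℤ, ℂ) n‖ ^ 2 ≤ G n := by
    intro n
    set x : ℝ := ((n-k).natAbs : ℝ) + c with hx
    have hx1 : (1:ℝ) ≤ x := by
      have h00 : (0:ℝ) ≤ ((n-k).natAbs : ℝ) := by positivity
      rw [hx]; linarith
    have e1 : ((n-k).natAbs : ℝ) = |(n:ℝ) - (k:ℝ)| := by
      rw [Nat.cast_natAbs]; push_cast; ring_nf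
    have e2 : ((|n| : ℤ) : ℝ) = |(n:ℝ)| := by push_cast; rfl
    have hnx : (|n| : ℝ) ≤ x := by
      have h3 := abs_sub_abs_le_abs_sub (n:ℝ) (k:ℝ)
      have h4 := abs_nonneg ((k:ℝ))
      rw [hx, hc, e1]
      linarith
    have hpow : (|n| : ℝ) ^ q ≤ x ^ N := by
      rcases eq_or_ne n 0 with h0 | h0
      · subst h0
        rw [show ((|(0:ℤ)| : ℝ)) = (0:ℝ) by norm_num, Real.zero_rpow hq.ne']
        positivity
      · have h1n : (1:ℝ) ≤ (|n| : ℝ) := by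
          have : (1:ℤ) ≤ |n| := by
            have h' : |n| = (n.natAbs : ℤ) := Int.abs_eq_natAbs n
            omega
          exact_mod_cast this
        calc (|n| : ℝ) ^ q ≤ (|n| : ℝ) ^ (N:ℝ) :=
              Real.rpow_le_rpow_of_exponent_le h1n hqN
          _ = (|n| : ℝ) ^ N := Real.rpow_natCast _ N
          _ ≤ x ^ N := pow_le_pow_left₀ (by positivity) hnx N
    have := mul_le_mul hpow (hpsi2 n) (by positivity) (by positivity)
    refine this.trans (le_of_eq ?_)
    rw [hG, hf]
  have hTsum : Summable (fun n : ℤ => (|n| : ℝ) ^ q *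
      ‖∑' m : ℤ, Complex.exp (-(Complex.I * t * lam m)) *
        conj ((φ m : ∀ _ : ℤ, ℂ) k) * (φ m : ∀ _ : ℤ, ℂ) n‖ ^ 2) := by
    refine Summable.of_nonneg_of_le (fun n => ?_) hmain hGsum
    have h1 : (0:ℝ) ≤ (|n| : ℝ) ^ q := Real.rpow_nonneg (by positivity) q
    positivity
  exact ⟨hTsum, Summable.tsum_le_tsum hmain hTsum hGsum⟩
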